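/- For every integer n ≥ 4, f(n) ≤ ⌊n/4⌋ + d, where d = 1 if n ≡ 0 (mod 4), d = 2 if n ≡ 1 (mod 4) or n ≡ 2 (mod 4), and d = 4 if n ≡ 3 (mod 4). -/

import Mathlib

/-- The Farey fractions of order `n`: the rationals in `[0,1]` whose (reduced) denominator
is at most `n`. -/
def fareySet (n : ℕ) : Finset ℚ :=
  ((Finset.range (n + 1) ×ˢ Finset.range (n + 1)).image fun p => (p.1 : ℚ) / (p.2 : ℚ)).filter
    fun q => 0 ≤ q ∧ q ≤ 1 ∧ q.den ≤ n

/-- The Farey sequence of order `n`: the Farey fractions of order `n` listed in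
increasing order. -/
def fareyList (n : ℕ) : List ℚ := (fareySet n).sort (· ≤ ·)

/-- Two reduced fractions `q = a/b` and `q' = a'/b'` are similarly ordered if
`(a' - a) * (b' - b) ≥ 0`. -/
def SimilarlyOrdered (q q' : ℚ) : Prop :=
  0 ≤ (q'.num - q.num) * ((q'.den : ℤ) - (q.den : ℤ))

/-- `fareyF n` is the largest `m` such that any two fractions whose indices in the Farey
sequence of order `n` differ by at most `m` are similarly ordered. -/
noncomputable def fareyF (n : ℕ) : ℕ :=
  sSup {m : ℕ | ∀ k l : Fin (fareyList n).length,
    Nat.dist k.val l.val ≤ m →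
      SimilarlyOrdered ((fareyList n).get k) ((fareyList n).get l)}

lemma rat_lt_iff (x y : ℚ) : x < y ↔ x.num * (y.den : ℤ) < y.num * (x.den : ℤ) := by
  have h1 : x < y ↔ (x.num:ℚ)/(x.den:ℚ) < (y.num:ℚ)/(y.den:ℚ) := by
    rw [Rat.num_div_den, Rat.num_div_den]
  rw [h1, div_lt_div_iff₀ (by exact_mod_cast x.pos) (by exact_mod_cast y.pos)]
  exact_mod_cast Iff.rfl

lemma rat_le_iff (x y : ℚ) : x ≤ y ↔ x.num * (y.den : ℤ) ≤ y.num * (x.den : ℤ) := by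
  have h1 : x ≤ y ↔ (x.num:ℚ)/(x.den:ℚ) ≤ (y.num:ℚ)/(y.den:ℚ) := by
    rw [Rat.num_div_den, Rat.num_div_den]
  rw [h1, div_le_div_iff₀ (by exact_mod_cast x.pos) (by exact_mod_cast y.pos)]
  exact_mod_cast Iff.rfl

lemma cop_succ (a : ℕ) : Nat.Coprime (a+1) a := by
  have h := ((Nat.coprime_add_mul_right_right a 1 1).mpr (Nat.coprime_one_right _)).symm
  have e : 1 + 1*a = a + 1 := by ring
  rwa [e] at h

def mkQ (a b : ℕ) (hb : b ≠ 0) (hcop : Nat.Coprime a b) : ℚ :=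
  ⟨(a : ℤ), b, hb, by simpa using hcop⟩
@[simp] lemma mkQ_num (a b hb hcop) : (mkQ a b hb hcop).num = (a : ℤ) := rfl
@[simp] lemma mkQ_den (a b hb hcop) : (mkQ a b hb hcop).den = b := rfl
lemma mkQ_eq (a b : ℕ) (hb : b ≠ 0) (hcop : Nat.Coprime a b) :
    mkQ a b hb hcop = (a : ℚ) / (b : ℚ) := by
  have := Rat.num_div_den (mkQ a b hb hcop)
  rw [mkQ_num, mkQ_den] at this
  rw [← this]; push_cast; ring

lemma mkQ_mem (n a b : ℕ) (hb : b ≠ 0) (hcop : Nat.Coprime a b)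
    (hab : a ≤ b) (hbn : b ≤ n) : mkQ a b hb hcop ∈ fareySet n := by
  have hbq : (0:ℚ) < (b:ℚ) := by exact_mod_cast Nat.pos_of_ne_zero hb
  refine Finset.mem_filter.mpr ⟨Finset.mem_image.mpr ⟨(a, b), ?_, ?_⟩, ?_, ?_, ?_⟩
  · exact Finset.mem_product.mpr ⟨Finset.mem_range.mpr (by omega), Finset.mem_range.mpr (by omega)⟩
  · exact (mkQ_eq a b hb hcop).symm
  · rw [mkQ_eq]; positivity
  · rw [mkQ_eq]
    rw [div_le_one hbq]
    exact_mod_cast hab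
  · simpa using hbn

lemma fareyF_le_of_witness (n B : ℕ) (q1 q2 : ℚ)
    (h1 : q1 ∈ fareySet n) (h2 : q2 ∈ fareySet n) (hlt : q1 < q2)
    (hbad : ¬ SimilarlyOrdered q1 q2)
    (hcount : ((fareySet n).filter (fun x => q1 < x ∧ x ≤ q2)).card ≤ B + 1) :
    fareyF n ≤ B := by
  obtain ⟨k, hk⟩ := List.mem_iff_get.mp (show q1 ∈ fareyList n from (Finset.mem_sort (α := ℚ) (· ≤ ·)).mpr h1)
  obtain ⟨l, hl⟩ := List.mem_iff_get.mp (show q2 ∈ fareyList n from (Finset.mem_sort (α := ℚ) (· ≤ ·)).mpr h2)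
  have hs : (fareyList n).SortedLT := Finset.sortedLT_sort _
  have hsm : StrictMono (fareyList n).get := hs.strictMono_get
  have hkl : k < l := by
    by_contra h
    push_neg at h
    have := hsm.monotone h
    rw [hk, hl] at this
    exact absurd hlt (not_lt.mpr this)
  have hcard : (l:ℕ) - (k:ℕ) ≤ ((fareySet n).filter (fun x => q1 < x ∧ x ≤ q2)).card := by
    rw [← Nat.card_Ioc]
    refine Finset.card_le_card_of_injOn
      (fun j => if h : j < (fareyList n).length then (fareyList n).get ⟨j, h⟩ else 0) ?_ ?_
    · intro j hj
      rw [Finset.mem_coe, Finset.mem_Ioc] at hj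
      have hjlt : j < (fareyList n).length := lt_of_le_of_lt hj.2 l.isLt
      show (if h : j < (fareyList n).length then (fareyList n).get ⟨j, h⟩ else 0) ∈ _
      rw [dif_pos hjlt]
      refine Finset.mem_filter.mpr ⟨((Finset.mem_sort (α := ℚ) (· ≤ ·)).mp (List.get_mem (fareyList n) ⟨j, hjlt⟩ : (fareyList n).get ⟨j, hjlt⟩ ∈ fareyList n)), ?_, ?_⟩
      · rw [← hk]
        exact hsm (show k < (⟨j, hjlt⟩ : Fin _) from hj.1)
      · rw [← hl]
        exact hsm.monotone (show (⟨j, hjlt⟩ : Fin _) ≤ l from hj.2)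
    · intro j hj j' hj' heq
      rw [Finset.coe_Ioc, Set.mem_Ioc] at hj hj'
      have hjlt : j < (fareyList n).length := lt_of_le_of_lt hj.2 l.isLt
      have hjlt' : j' < (fareyList n).length := lt_of_le_of_lt hj'.2 l.isLt
      simp only [dif_pos hjlt, dif_pos hjlt'] at heq
      have := hsm.injective heq
      exact congrArg Fin.val this
  refine csSup_le ⟨0, ?_⟩ ?_
  · intro k' l' hd
    have hkl' : k' = l' := Fin.ext (Nat.eq_of_dist_eq_zero (Nat.le_zero.mp hd))
    subst hkl'
    simp [SimilarlyOrdered]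
  · intro m hm
    by_contra hB
    push_neg at hB
    have hd : Nat.dist (k:ℕ) (l:ℕ) ≤ m := by
      rw [Nat.dist_eq_sub_of_le (le_of_lt hkl)]
      omega
    have := hm k l hd
    rw [hk, hl] at this
    exact hbad this

lemma cop_odd_two (M : ℕ) : Nat.Coprime (2*M+1) 2 := Nat.coprime_two_right.mpr ⟨M, by ring⟩

lemma cop1 (M : ℕ) : Nat.Coprime (2*M+1) (4*M+4) := by
  have h := (Nat.coprime_add_mul_right_right (2*M+1) 2 2).mpr (cop_odd_two M)
  have e : 2 + 2*(2*M+1) = 4*M+4 := by ring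
  rwa [e] at h

lemma cop2 (M : ℕ) : Nat.Coprime (2*M+2) (4*M+3) := by
  have h1 : Nat.Coprime (2*M+2) (2*M+1) := cop_succ (2*M+1)
  have h := (Nat.coprime_add_mul_right_right (2*M+2) (2*M+1) 1).mpr h1
  have e : 2*M+1 + 1*(2*M+2) = 4*M+3 := by ring
  rwa [e] at h

lemma case0 (M : ℕ) : fareyF (4*M+4) ≤ M + 2 := by
  apply fareyF_le_of_witness _ _ (mkQ (2*M+1) (4*M+4) (by omega) (cop1 M))
      (mkQ (2*M+2) (4*M+3) (by omega) (cop2 M))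
  · exact mkQ_mem _ _ _ _ _ (by omega) (by omega)
  · exact mkQ_mem _ _ _ _ _ (by omega) (by omega)
  · rw [rat_lt_iff]; simp only [mkQ_num, mkQ_den]; push_cast; nlinarith
  · simp only [SimilarlyOrdered, mkQ_num, mkQ_den]; push_cast; intro h; nlinarith
  · -- counting
    refine le_trans (Finset.card_le_card (?_ :
        _ ⊆ insert (mkQ (2*M+2) (4*M+3) (by omega) (cop2 M)) (insert ((1:ℚ)/2)
          ((Finset.Icc (M+1) (2*M+1)).image (fun k : ℕ => (k:ℚ)/(2*k+1)))))) ?_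
    · intro x hx
      obtain ⟨hxF, hx1, hx2⟩ := Finset.mem_filter.mp hx
      obtain ⟨-, hx0, hxle1, hxden⟩ := Finset.mem_filter.mp hxF
      have hp0 : (0:ℤ) ≤ x.num := Rat.num_nonneg.mpr hx0
      have hq1' : (1:ℤ) ≤ (x.den:ℤ) := by exact_mod_cast x.pos
      have hqn : (x.den:ℤ) ≤ 4*(M:ℤ)+4 := by exact_mod_cast hxden
      rw [rat_lt_iff] at hx1
      rw [rat_le_iff] at hx2
      simp only [mkQ_num, mkQ_den] at hx1 hx2
      push_cast at hx1 hx2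
      rcases lt_trichotomy (2*x.num) ((x.den:ℤ)) with h|h|h
      · -- below 1/2 : x = p/(2p+1)
        have hq2p : (x.den:ℤ) = 2*x.num + 1 := by
          by_contra hne
          have h2 : 2*x.num ≤ (x.den:ℤ) - 2 := by omega
          have hmul : (2*x.num) * (4*(M:ℤ)+4) ≤ ((x.den:ℤ) - 2) * (4*(M:ℤ)+4) :=
            mul_le_mul_of_nonneg_right h2 (by positivity)
          nlinarith [hx1, hmul, hqn]
        have hpl : (M:ℤ)+1 ≤ x.num := by
          have hmul : (2*(M:ℤ)+1) * (x.den:ℤ) = (2*(M:ℤ)+1)*(2*x.num+1) := by rw [hq2p]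
          nlinarith [hx1, hmul]
        have hpu : x.num ≤ 2*(M:ℤ)+1 := by omega
        refine Finset.mem_insert.mpr (Or.inr (Finset.mem_insert.mpr (Or.inr ?_)))
        refine Finset.mem_image.mpr ⟨x.num.toNat, Finset.mem_Icc.mpr ⟨by omega, by omega⟩, ?_⟩
        have h1' : ((x.num.toNat:ℕ):ℚ) = ((x.num:ℤ):ℚ) := by
          exact_mod_cast congrArg (fun z : ℤ => (z:ℚ)) (Int.toNat_of_nonneg hp0)
        have hden' : ((x.den:ℕ):ℚ) = 2*((x.num.toNat:ℕ):ℚ)+1 := by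
          have : ((x.den:ℕ):ℤ) = 2*(x.num.toNat:ℤ)+1 := by omega
          exact_mod_cast this
        calc ((x.num.toNat:ℕ):ℚ)/(2*((x.num.toNat:ℕ):ℚ)+1)
            = ((x.num:ℤ):ℚ)/((x.den:ℕ):ℚ) := by rw [hden', h1']
          _ = x := Rat.num_div_den x
      · -- x = 1/2
        have hkey : x.num = 1 ∧ x.den = 2 := by
          have hred := x.reduced
          have hd : x.den = 2 * x.num.toNat := by omega
          have hgd : Nat.gcd x.num.natAbs (2 * x.num.toNat) = 1 := hd ▸ hred
          have hna : x.num.natAbs = x.num.toNat := by omega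
          rw [hna, Nat.gcd_eq_left ⟨2, by ring⟩] at hgd
          omega
        refine Finset.mem_insert.mpr (Or.inr (Finset.mem_insert.mpr (Or.inl ?_)))
        have hnd := Rat.num_div_den x
        rw [hkey.1, hkey.2] at hnd
        rw [← hnd]; norm_num
      · -- above 1/2
        have ht4 : 2*x.num ≤ (x.den:ℤ) + 2 := by
          by_contra h4
          push_neg at h4
          have h4' : (x.den:ℤ)+3 ≤ 2*x.num := by omega
          have hmul : ((x.den:ℤ)+3) * (4*(M:ℤ)+3) ≤ (2*x.num) * (4*(M:ℤ)+3) :=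
            mul_le_mul_of_nonneg_right h4' (by positivity)
          nlinarith [hx2, hmul, hqn]
        have ht2 : 2*x.num ≠ (x.den:ℤ) + 2 := by
          intro h2
          have hmul : (2*x.num)*(4*(M:ℤ)+3) = ((x.den:ℤ)+2)*(4*(M:ℤ)+3) := by rw [h2]
          nlinarith [hx2, hmul, hqn]
        have ht1 : 2*x.num = (x.den:ℤ)+1 := by omega
        have hq3 : (4*(M:ℤ)+3) ≤ (x.den:ℤ) := by
          have hmul : (2*x.num)*(4*(M:ℤ)+3) = ((x.den:ℤ)+1)*(4*(M:ℤ)+3) := by rw [ht1]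
          nlinarith [hx2, hmul]
        have hde : x.den = 4*M+3 := by omega
        have hnu : x.num = 2*(M:ℤ)+2 := by omega
        refine Finset.mem_insert.mpr (Or.inl ?_)
        refine Rat.ext ?_ ?_
        · rw [hnu, mkQ_num]; push_cast; ring
        · rw [hde, mkQ_den]
    · have hcX : ((Finset.Icc (M+1) (2*M+1)).image (fun k : ℕ => (k:ℚ)/(2*k+1))).card ≤ M+1 :=
        le_trans Finset.card_image_le (by rw [Nat.card_Icc]; omega)
      have h1 := Finset.card_insert_le ((1:ℚ)/2)
        ((Finset.Icc (M+1) (2*M+1)).image (fun k : ℕ => (k:ℚ)/(2*k+1)))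
      have h2 := Finset.card_insert_le (mkQ (2*M+2) (4*M+3) (by omega) (cop2 M))
        (insert ((1:ℚ)/2) ((Finset.Icc (M+1) (2*M+1)).image (fun k : ℕ => (k:ℚ)/(2*k+1))))
      omega

lemma cop3 (M : ℕ) : Nat.Coprime (2*M+2) (4*M+5) := by
  have h := (Nat.coprime_add_mul_right_right (2*M+2) 1 2).mpr (Nat.coprime_one_right _)
  have e : 1 + 2*(2*M+2) = 4*M+5 := by ring
  rwa [e] at h

lemma cop4 (M : ℕ) : Nat.Coprime (2*M+3) (4*M+4) := by
  have h := Nat.Coprime.mul_right (cop_odd_two (M+1)) (cop_succ (2*M+2))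
  have e : 2*(2*M+2) = 4*M+4 := by ring
  rwa [show 2*M+1+1 = 2*M+2 from rfl, show 2*(M+1)+1 = 2*M+3 by ring, e] at h

lemma caseB (M e : ℕ) (he : e ≤ 1) : fareyF (4*M+5+e) ≤ M + 3 := by
  apply fareyF_le_of_witness _ _ (mkQ (2*M+2) (4*M+5) (by omega) (cop3 M))
      (mkQ (2*M+3) (4*M+4) (by omega) (cop4 M))
  · exact mkQ_mem _ _ _ _ _ (by omega) (by omega)
  · exact mkQ_mem _ _ _ _ _ (by omega) (by omega)
  · rw [rat_lt_iff]; simp only [mkQ_num, mkQ_den]; push_cast; nlinarith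
  · simp only [SimilarlyOrdered, mkQ_num, mkQ_den]; push_cast; intro h; nlinarith
  · refine le_trans (Finset.card_le_card (?_ :
        _ ⊆ insert (mkQ (2*M+3) (4*M+4) (by omega) (cop4 M)) (insert ((1:ℚ)/2)
          ((Finset.Icc (M+1) (2*M+2)).image (fun k : ℕ => ((k:ℚ)+1)/(2*(k:ℚ)+1)))))) ?_
    · intro x hx
      obtain ⟨hxF, hx1, hx2⟩ := Finset.mem_filter.mp hx
      obtain ⟨-, hx0, hxle1, hxden⟩ := Finset.mem_filter.mp hxF
      have hp0 : (0:ℤ) ≤ x.num := Rat.num_nonneg.mpr hx0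
      have hq1' : (1:ℤ) ≤ (x.den:ℤ) := by exact_mod_cast x.pos
      have hqn : (x.den:ℤ) ≤ 4*(M:ℤ)+5+(e:ℤ) := by exact_mod_cast hxden
      have he' : (e:ℤ) ≤ 1 := by exact_mod_cast he
      rw [rat_lt_iff] at hx1
      rw [rat_le_iff] at hx2
      simp only [mkQ_num, mkQ_den] at hx1 hx2
      push_cast at hx1 hx2
      rcases lt_trichotomy (2*x.num) ((x.den:ℤ)) with h|h|h
      · -- below 1/2 : impossible
        exfalso
        have h2 : 2*x.num ≤ (x.den:ℤ) - 1 := by omega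
        have hmul : (2*x.num) * (4*(M:ℤ)+5) ≤ ((x.den:ℤ) - 1) * (4*(M:ℤ)+5) :=
          mul_le_mul_of_nonneg_right h2 (by positivity)
        nlinarith [hx1, hmul, hqn, he']
      · -- x = 1/2
        have hkey : x.num = 1 ∧ x.den = 2 := by
          have hred := x.reduced
          have hd : x.den = 2 * x.num.toNat := by omega
          have hgd : Nat.gcd x.num.natAbs (2 * x.num.toNat) = 1 := hd ▸ hred
          have hna : x.num.natAbs = x.num.toNat := by omega
          rw [hna, Nat.gcd_eq_left ⟨2, by ring⟩] at hgd
          omega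
        refine Finset.mem_insert.mpr (Or.inr (Finset.mem_insert.mpr (Or.inl ?_)))
        have hnd := Rat.num_div_den x
        rw [hkey.1, hkey.2] at hnd
        rw [← hnd]; norm_num
      · -- above 1/2
        have ht5 : 2*x.num ≤ (x.den:ℤ) + 3 := by
          by_contra h4
          push_neg at h4
          have h4' : (x.den:ℤ)+4 ≤ 2*x.num := by omega
          have hmul : ((x.den:ℤ)+4) * (4*(M:ℤ)+4) ≤ (2*x.num) * (4*(M:ℤ)+4) :=
            mul_le_mul_of_nonneg_right h4' (by positivity)
          nlinarith [hx2, hmul, hqn, he']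
        have ht3 : 2*x.num ≠ (x.den:ℤ) + 3 := by
          intro h3
          have hmul : (2*x.num)*(4*(M:ℤ)+4) = ((x.den:ℤ)+3)*(4*(M:ℤ)+4) := by rw [h3]
          have hge : 6*(M:ℤ)+6 ≤ (x.den:ℤ) := by nlinarith [hx2, hmul]
          omega
        rcases (by omega : 2*x.num = (x.den:ℤ)+2 ∨ 2*x.num = (x.den:ℤ)+1) with h2 | h1
        · -- t = 2 : x = q2 or contradiction
          have hmul : (2*x.num)*(4*(M:ℤ)+4) = ((x.den:ℤ)+2)*(4*(M:ℤ)+4) := by rw [h2]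
          have hge : 4*(M:ℤ)+4 ≤ (x.den:ℤ) := by nlinarith [hx2, hmul]
          rcases (by omega : (x.den:ℤ) = 4*(M:ℤ)+4 ∨ ((x.den:ℤ) = 4*(M:ℤ)+6 ∧ e = 1)) with hd | hd
          · have hde : x.den = 4*M+4 := by exact_mod_cast hd
            have hnu : x.num = 2*(M:ℤ)+3 := by omega
            refine Finset.mem_insert.mpr (Or.inl ?_)
            refine Rat.ext ?_ ?_
            · rw [hnu, mkQ_num]; push_cast; ring
            · rw [hde, mkQ_den]
          · exfalso
            have hde : x.den = 4*M+6 := by exact_mod_cast hd.1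
            have hna : x.num.natAbs = 2*M+4 := by omega
            have hred := x.reduced
            rw [hna, hde] at hred
            have hdvd : (2:ℕ) ∣ Nat.gcd (2*M+4) (4*M+6) := Nat.dvd_gcd ⟨M+2, by ring⟩ ⟨2*M+3, by ring⟩
            rw [hred] at hdvd
            exact absurd hdvd (by norm_num)
        · -- t = 1 : x in Y
          have hmul : (2*x.num)*(4*(M:ℤ)+4) = ((x.den:ℤ)+1)*(4*(M:ℤ)+4) := by rw [h1]
          have hge : 2*(M:ℤ)+2 ≤ (x.den:ℤ) := by nlinarith [hx2, hmul]
          refine Finset.mem_insert.mpr (Or.inr (Finset.mem_insert.mpr (Or.inr ?_)))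
          refine Finset.mem_image.mpr ⟨x.num.toNat - 1, Finset.mem_Icc.mpr ⟨by omega, by omega⟩, ?_⟩
          have e1 : ((x.num.toNat - 1 : ℕ):ℚ)+1 = ((x.num:ℤ):ℚ) := by
            have : ((x.num.toNat - 1 : ℕ):ℤ)+1 = x.num := by omega
            exact_mod_cast this
          have e2 : 2*((x.num.toNat - 1 : ℕ):ℚ)+1 = ((x.den:ℕ):ℚ) := by
            have : 2*((x.num.toNat - 1 : ℕ):ℤ)+1 = (x.den:ℤ) := by omega
            exact_mod_cast this
          rw [e2, e1]
          exact Rat.num_div_den x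
    · have hcY : ((Finset.Icc (M+1) (2*M+2)).image (fun k : ℕ => ((k:ℚ)+1)/(2*(k:ℚ)+1))).card ≤ M+2 :=
        le_trans Finset.card_image_le (by rw [Nat.card_Icc]; omega)
      have h1 := Finset.card_insert_le ((1:ℚ)/2)
        ((Finset.Icc (M+1) (2*M+2)).image (fun k : ℕ => ((k:ℚ)+1)/(2*(k:ℚ)+1)))
      have h2 := Finset.card_insert_le (mkQ (2*M+3) (4*M+4) (by omega) (cop4 M))
        (insert ((1:ℚ)/2) ((Finset.Icc (M+1) (2*M+2)).image (fun k : ℕ => ((k:ℚ)+1)/(2*(k:ℚ)+1))))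
      omega

lemma cop5 (M : ℕ) : Nat.Coprime (2*M+4) (4*M+9) := by
  have h := (Nat.coprime_add_mul_right_right (2*M+4) 1 2).mpr (Nat.coprime_one_right _)
  have e : 1 + 2*(2*M+4) = 4*M+9 := by ring
  rwa [e] at h

lemma cop6 (M : ℕ) : Nat.Coprime (2*M+5) (4*M+8) := by
  have h := Nat.Coprime.mul_right (cop_odd_two (M+2)) (cop_succ (2*M+4))
  have e : 2*(2*M+4) = 4*M+8 := by ring
  rwa [show 2*(M+2)+1 = 2*M+5 by ring, e] at h

lemma case3 (M : ℕ) : fareyF (4*M+11) ≤ M + 6 := by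
  apply fareyF_le_of_witness _ _ (mkQ (2*M+4) (4*M+9) (by omega) (cop5 M))
      (mkQ (2*M+5) (4*M+8) (by omega) (cop6 M))
  · exact mkQ_mem _ _ _ _ _ (by omega) (by omega)
  · exact mkQ_mem _ _ _ _ _ (by omega) (by omega)
  · rw [rat_lt_iff]; simp only [mkQ_num, mkQ_den]; push_cast; nlinarith
  · simp only [SimilarlyOrdered, mkQ_num, mkQ_den]; push_cast; intro h; nlinarith
  · refine le_trans (Finset.card_le_card (?_ :
        _ ⊆ insert (mkQ (2*M+5) (4*M+8) (by omega) (cop6 M)) (insert ((1:ℚ)/2)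
          (insert ((2*(M:ℚ)+5)/(4*(M:ℚ)+11))
          ((Finset.Icc (M+2) (2*M+5)).image (fun k : ℕ => ((k:ℚ)+1)/(2*(k:ℚ)+1))))))) ?_
    · intro x hx
      obtain ⟨hxF, hx1, hx2⟩ := Finset.mem_filter.mp hx
      obtain ⟨-, hx0, hxle1, hxden⟩ := Finset.mem_filter.mp hxF
      have hp0 : (0:ℤ) ≤ x.num := Rat.num_nonneg.mpr hx0
      have hq1' : (1:ℤ) ≤ (x.den:ℤ) := by exact_mod_cast x.pos
      have hqn : (x.den:ℤ) ≤ 4*(M:ℤ)+11 := by exact_mod_cast hxden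
      rw [rat_lt_iff] at hx1
      rw [rat_le_iff] at hx2
      simp only [mkQ_num, mkQ_den] at hx1 hx2
      push_cast at hx1 hx2
      rcases lt_trichotomy (2*x.num) ((x.den:ℤ)) with h|h|h
      · -- below 1/2 : only (2M+5)/(4M+11)
        have ht1 : (x.den:ℤ) = 2*x.num + 1 := by
          by_contra hne
          have h2 : 2*x.num ≤ (x.den:ℤ) - 2 := by omega
          have hmul : (2*x.num) * (4*(M:ℤ)+9) ≤ ((x.den:ℤ) - 2) * (4*(M:ℤ)+9) :=
            mul_le_mul_of_nonneg_right h2 (by positivity)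
          nlinarith [hx1, hmul, hqn]
        have hge : 4*(M:ℤ)+11 ≤ (x.den:ℤ) := by
          have hmul : (2*x.num) * (4*(M:ℤ)+9) = ((x.den:ℤ) - 1) * (4*(M:ℤ)+9) := by
            rw [show 2*x.num = (x.den:ℤ) - 1 by omega]
          nlinarith [hx1, hmul]
        have e1 : ((x.num:ℤ):ℚ) = 2*(M:ℚ)+5 := by
          have : x.num = 2*(M:ℤ)+5 := by omega
          rw [this]; push_cast; ring
        have e2 : ((x.den:ℕ):ℚ) = 4*(M:ℚ)+11 := by
          have : (x.den:ℤ) = 4*(M:ℤ)+11 := by omega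
          exact_mod_cast this
        refine Finset.mem_insert.mpr (Or.inr (Finset.mem_insert.mpr (Or.inr
          (Finset.mem_insert.mpr (Or.inl ?_)))))
        rw [← Rat.num_div_den x, e1, e2]
      · -- x = 1/2
        have hkey : x.num = 1 ∧ x.den = 2 := by
          have hred := x.reduced
          have hd : x.den = 2 * x.num.toNat := by omega
          have hgd : Nat.gcd x.num.natAbs (2 * x.num.toNat) = 1 := hd ▸ hred
          have hna : x.num.natAbs = x.num.toNat := by omega
          rw [hna, Nat.gcd_eq_left ⟨2, by ring⟩] at hgd
          omega
        refine Finset.mem_insert.mpr (Or.inr (Finset.mem_insert.mpr (Or.inl ?_)))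
        have hnd := Rat.num_div_den x
        rw [hkey.1, hkey.2] at hnd
        rw [← hnd]; norm_num
      · -- above 1/2
        have ht5 : 2*x.num ≤ (x.den:ℤ) + 3 := by
          by_contra h4
          push_neg at h4
          have h4' : (x.den:ℤ)+4 ≤ 2*x.num := by omega
          have hmul : ((x.den:ℤ)+4) * (4*(M:ℤ)+8) ≤ (2*x.num) * (4*(M:ℤ)+8) :=
            mul_le_mul_of_nonneg_right h4' (by positivity)
          nlinarith [hx2, hmul, hqn]
        have ht3 : 2*x.num ≠ (x.den:ℤ) + 3 := by
          intro h3
          have hmul : (2*x.num)*(4*(M:ℤ)+8) = ((x.den:ℤ)+3)*(4*(M:ℤ)+8) := by rw [h3]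
          have hge : 6*(M:ℤ)+12 ≤ (x.den:ℤ) := by nlinarith [hx2, hmul]
          omega
        rcases (by omega : 2*x.num = (x.den:ℤ)+2 ∨ 2*x.num = (x.den:ℤ)+1) with h2 | h1
        · have hmul : (2*x.num)*(4*(M:ℤ)+8) = ((x.den:ℤ)+2)*(4*(M:ℤ)+8) := by rw [h2]
          have hge : 4*(M:ℤ)+8 ≤ (x.den:ℤ) := by nlinarith [hx2, hmul]
          rcases (by omega : (x.den:ℤ) = 4*(M:ℤ)+8 ∨ (x.den:ℤ) = 4*(M:ℤ)+10) with hd | hd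
          · have hde : x.den = 4*M+8 := by exact_mod_cast hd
            have hnu : x.num = 2*(M:ℤ)+5 := by omega
            refine Finset.mem_insert.mpr (Or.inl ?_)
            refine Rat.ext ?_ ?_
            · rw [hnu, mkQ_num]; push_cast; ring
            · rw [hde, mkQ_den]
          · exfalso
            have hde : x.den = 4*M+10 := by exact_mod_cast hd
            have hna : x.num.natAbs = 2*M+6 := by omega
            have hred := x.reduced
            rw [hna, hde] at hred
            have hdvd : (2:ℕ) ∣ Nat.gcd (2*M+6) (4*M+10) :=
              Nat.dvd_gcd ⟨M+3, by ring⟩ ⟨2*M+5, by ring⟩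
            rw [hred] at hdvd
            exact absurd hdvd (by norm_num)
        · have hmul : (2*x.num)*(4*(M:ℤ)+8) = ((x.den:ℤ)+1)*(4*(M:ℤ)+8) := by rw [h1]
          have hge : 2*(M:ℤ)+4 ≤ (x.den:ℤ) := by nlinarith [hx2, hmul]
          refine Finset.mem_insert.mpr (Or.inr (Finset.mem_insert.mpr (Or.inr
            (Finset.mem_insert.mpr (Or.inr ?_)))))
          refine Finset.mem_image.mpr ⟨x.num.toNat - 1, Finset.mem_Icc.mpr ⟨by omega, by omega⟩, ?_⟩
          have e1 : ((x.num.toNat - 1 : ℕ):ℚ)+1 = ((x.num:ℤ):ℚ) := by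
            have : ((x.num.toNat - 1 : ℕ):ℤ)+1 = x.num := by omega
            exact_mod_cast this
          have e2 : 2*((x.num.toNat - 1 : ℕ):ℚ)+1 = ((x.den:ℕ):ℚ) := by
            have : 2*((x.num.toNat - 1 : ℕ):ℤ)+1 = (x.den:ℤ) := by omega
            exact_mod_cast this
          rw [e2, e1]
          exact Rat.num_div_den x
    · have hcY : ((Finset.Icc (M+2) (2*M+5)).image (fun k : ℕ => ((k:ℚ)+1)/(2*(k:ℚ)+1))).card ≤ M+4 :=
        le_trans Finset.card_image_le (by rw [Nat.card_Icc]; omega)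
      have h0 := Finset.card_insert_le ((2*(M:ℚ)+5)/(4*(M:ℚ)+11))
        ((Finset.Icc (M+2) (2*M+5)).image (fun k : ℕ => ((k:ℚ)+1)/(2*(k:ℚ)+1)))
      have h1 := Finset.card_insert_le ((1:ℚ)/2)
        (insert ((2*(M:ℚ)+5)/(4*(M:ℚ)+11))
          ((Finset.Icc (M+2) (2*M+5)).image (fun k : ℕ => ((k:ℚ)+1)/(2*(k:ℚ)+1))))
      have h2 := Finset.card_insert_le (mkQ (2*M+5) (4*M+8) (by omega) (cop6 M))
        (insert ((1:ℚ)/2) (insert ((2*(M:ℚ)+5)/(4*(M:ℚ)+11))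
          ((Finset.Icc (M+2) (2*M+5)).image (fun k : ℕ => ((k:ℚ)+1)/(2*(k:ℚ)+1)))))
      omega

lemma case7 : fareyF 7 ≤ 5 := by
  apply fareyF_le_of_witness _ _ (mkQ 1 6 (by omega) (by norm_num [Nat.Coprime]))
      (mkQ 2 5 (by omega) (by norm_num [Nat.Coprime]))
  · exact mkQ_mem _ _ _ _ _ (by omega) (by omega)
  · exact mkQ_mem _ _ _ _ _ (by omega) (by omega)
  · rw [rat_lt_iff]; simp only [mkQ_num, mkQ_den]; norm_num
  · simp only [SimilarlyOrdered, mkQ_num, mkQ_den]; norm_num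
  · refine le_trans (Finset.card_le_card (?_ :
        _ ⊆ insert (mkQ 2 5 (by omega) (by norm_num [Nat.Coprime]))
          ({(1:ℚ)/3, (1:ℚ)/4, (1:ℚ)/5, (2:ℚ)/7} : Finset ℚ))) ?_
    · intro x hx
      obtain ⟨hxF, hx1, hx2⟩ := Finset.mem_filter.mp hx
      obtain ⟨-, hx0, hxle1, hxden⟩ := Finset.mem_filter.mp hxF
      have hp0 : (0:ℤ) ≤ x.num := Rat.num_nonneg.mpr hx0
      have hq1' : (1:ℤ) ≤ (x.den:ℤ) := by exact_mod_cast x.pos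
      have hqn : (x.den:ℤ) ≤ 7 := by exact_mod_cast hxden
      rw [rat_lt_iff] at hx1
      rw [rat_le_iff] at hx2
      simp only [mkQ_num, mkQ_den] at hx1 hx2
      push_cast at hx1 hx2
      have hn12 : x.num = 1 ∨ x.num = 2 := by omega
      rcases hn12 with h1 | h2
      · have hd : (x.den:ℤ) = 3 ∨ (x.den:ℤ) = 4 ∨ (x.den:ℤ) = 5 := by omega
        have hnum' : ((x.num:ℤ):ℚ) = 1 := by rw [h1]; norm_num
        rcases hd with h | h | h <;>
          [ (have hden' : ((x.den:ℕ):ℚ) = 3 := by exact_mod_cast h);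
            (have hden' : ((x.den:ℕ):ℚ) = 4 := by exact_mod_cast h);
            (have hden' : ((x.den:ℕ):ℚ) = 5 := by exact_mod_cast h)] <;>
          [ (have hx' : x = (1:ℚ)/3 := by rw [← Rat.num_div_den x, hnum', hden']);
            (have hx' : x = (1:ℚ)/4 := by rw [← Rat.num_div_den x, hnum', hden']);
            (have hx' : x = (1:ℚ)/5 := by rw [← Rat.num_div_den x, hnum', hden'])] <;>
          simp [hx']
      · have hd : (x.den:ℤ) = 5 ∨ (x.den:ℤ) = 6 ∨ (x.den:ℤ) = 7 := by omega
        rcases hd with h | h | h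
        · refine Finset.mem_insert.mpr (Or.inl ?_)
          refine Rat.ext ?_ ?_
          · rw [h2, mkQ_num]; norm_num
          · rw [mkQ_den]; exact_mod_cast h
        · exfalso
          have hna : x.num.natAbs = 2 := by omega
          have hde : x.den = 6 := by exact_mod_cast h
          have hred := x.reduced
          rw [hna, hde] at hred
          norm_num at hred
        · have hnum' : ((x.num:ℤ):ℚ) = 2 := by rw [h2]; norm_num
          have hden' : ((x.den:ℕ):ℚ) = 7 := by exact_mod_cast h
          have hx' : x = (2:ℚ)/7 := by rw [← Rat.num_div_den x, hnum', hden']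
          simp [hx']
    · have := Finset.card_insert_le (mkQ 2 5 (by omega) (by norm_num [Nat.Coprime]))
        ({(1:ℚ)/3, (1:ℚ)/4, (1:ℚ)/5, (2:ℚ)/7} : Finset ℚ)
      have hc4 : ({(1:ℚ)/3, (1:ℚ)/4, (1:ℚ)/5, (2:ℚ)/7} : Finset ℚ).card ≤ 4 := by
        apply le_trans (Finset.card_insert_le _ _)
        apply Nat.succ_le_succ
        apply le_trans (Finset.card_insert_le _ _)
        apply Nat.succ_le_succ
        apply le_trans (Finset.card_insert_le _ _)
        apply Nat.succ_le_succ
        simp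
      omega


/-- For every integer `n ≥ 4`, `f(n) ≤ ⌊n/4⌋ + d`, where `d = 1` if `n ≡ 0 (mod 4)`,
`d = 2` if `n ≡ 1, 2 (mod 4)` and `d = 4` if `n ≡ 3 (mod 4)`. -/
theorem farey_f_upper_bound (n : ℕ) (hn : 4 ≤ n) :
    fareyF n ≤ n / 4 + (if n % 4 = 0 then 1 else if n % 4 = 3 then 4 else 2) := by
  rcases (by omega : n % 4 = 0 ∨ n % 4 = 1 ∨ n % 4 = 2 ∨ n % 4 = 3) with h | h | h | h
  · obtain ⟨M, rfl⟩ : ∃ M, n = 4*M+4 := ⟨n/4 - 1, by omega⟩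
    rw [if_pos (by omega)]
    have := case0 M
    omega
  · obtain ⟨M, rfl⟩ : ∃ M, n = 4*M+5 := ⟨n/4 - 1, by omega⟩
    rw [if_neg (by omega), if_neg (by omega)]
    have := caseB M 0 (by omega)
    simp only [Nat.add_zero] at this
    omega
  · obtain ⟨M, rfl⟩ : ∃ M, n = 4*M+6 := ⟨n/4 - 1, by omega⟩
    rw [if_neg (by omega), if_neg (by omega)]
    have := caseB M 1 (by omega)
    have e : 4*M+5+1 = 4*M+6 := by omega
    rw [e] at this
    omega
  · rcases (by omega : n = 7 ∨ 11 ≤ n) with h7 | h11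
    · subst h7
      have := case7
      norm_num
      omega
    · obtain ⟨M, rfl⟩ : ∃ M, n = 4*M+11 := ⟨n/4 - 2, by omega⟩
      rw [if_neg (by omega), if_pos (by omega)]
      have := case3 M
      omega
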